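/- arXiv:2507.01637 — 3 statements merged into one kernel-verified Lean document; each statement's English description precedes it below -/
import Mathlib

section
/- The groupoid cardinality of the action groupoid F ⫽ G of a finite group G acting on a finite set F equals |F| / |G|, where groupoid cardinality is the sum over isomorphism classes of objects of the reciprocals of the orders of the automorphism groups. -/
open CategoryTheory MulAction

/-- Groupoid cardinality: sum over isomorphism classes of the reciprocal of the
order of the automorphism group. -/
noncomputable def gpdCard (X : Type*) [Groupoid X] : ℚ :=
  ∑ᶠ c : Quotient (isIsomorphicSetoid X),
    (1 : ℚ) / Nat.card (Quotient.out c ⟶ Quotient.out c)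

/-- The action groupoid `F ⫽ G`: objects are elements of `F`, morphisms `x ⟶ y`
are group elements `g` with `g • x = y`. -/
def ActionGpd (G F : Type*) [Group G] [MulAction G F] := F

/-- The element of `F` underlying an object of the action groupoid. -/
def ActionGpd.pt {G F : Type*} [Group G] [MulAction G F] (x : ActionGpd G F) : F := x

/-- The object of the action groupoid corresponding to an element of `F`. -/
def ActionGpd.mk' (G : Type*) {F : Type*} [Group G] [MulAction G F] (x : F) :
    ActionGpd G F := x

instance (G F : Type*) [Group G] [MulAction G F] : Groupoid (ActionGpd G F) where
  Hom x y := {g : G // g • x.pt = y.pt}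
  id x := ⟨1, one_smul _ _⟩
  comp {x y z} f g := ⟨g.1 * f.1, by rw [mul_smul, f.2, g.2]⟩
  id_comp := by intros; apply Subtype.ext; simp
  comp_id := by intros; apply Subtype.ext; simp
  assoc := by intros; apply Subtype.ext; simp [mul_assoc]
  inv {x y} f := ⟨f.1⁻¹, inv_smul_eq_iff.mpr f.2.symm⟩
  inv_comp := by intros; apply Subtype.ext; simp
  comp_inv := by intros; apply Subtype.ext; simp

/-- The free loop groupoid `ΛX` of a groupoid `X`: objects are pairs `(x, γ)`
with `γ : x ⟶ x`; morphisms `(x, γ) ⟶ (y, δ)` are `f : x ⟶ y` with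
`γ ≫ f = f ≫ δ`. -/
structure LoopGpd (X : Type*) [Groupoid X] where
  pt : X
  loop : pt ⟶ pt

instance (X : Type*) [Groupoid X] : Groupoid (LoopGpd X) where
  Hom a b := {f : a.pt ⟶ b.pt // a.loop ≫ f = f ≫ b.loop}
  id a := ⟨𝟙 _, by simp⟩
  comp {a b c} f g := ⟨f.1 ≫ g.1, by
    rw [← Category.assoc, f.2, Category.assoc, g.2, Category.assoc]⟩
  id_comp := by intros; apply Subtype.ext; simp
  comp_id := by intros; apply Subtype.ext; simp
  assoc := by intros; apply Subtype.ext; simp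
  inv {a b} f := ⟨Groupoid.inv f.1, by
    rw [Groupoid.inv_eq_inv, IsIso.eq_inv_comp, ← Category.assoc, ← f.2,
      Category.assoc, IsIso.hom_inv_id, Category.comp_id]⟩
  inv_comp := by intros; apply Subtype.ext; simp
  comp_inv := by intros; apply Subtype.ext; simp


section Aux

variable (G F : Type*) [Group G] [MulAction G F]

lemma actionGpd_rel_iff (a b : F) :
    (isIsomorphicSetoid (ActionGpd G F)).r a b ↔ a ∈ orbit G b := by
  constructor
  · rintro ⟨i⟩
    exact ⟨(Groupoid.inv i.hom).1, (Groupoid.inv i.hom).2⟩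
  · rintro ⟨g, rfl⟩
    exact ⟨(Groupoid.isoEquivHom (ActionGpd.mk' G (g • b)) (ActionGpd.mk' G b)).symm
      ⟨g⁻¹, inv_smul_smul g b⟩⟩

end Aux

/-- The groupoid cardinality of the action groupoid `F ⫽ G` of a finite group
`G` acting on a finite set `F` is `|F| / |G|`. -/
theorem gpdCard_actionGpd (G F : Type*) [Group G] [Fintype G] [Fintype F]
    [MulAction G F] :
    gpdCard (ActionGpd G F) = (Nat.card F : ℚ) / (Nat.card G : ℚ) := by
  classical
  letI : Fintype (ActionGpd G F) := (inferInstance : Fintype F)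
  letI : Fintype (Quotient (isIsomorphicSetoid (ActionGpd G F))) := Quotient.fintype _
  set Q := Quotient (isIsomorphicSetoid (ActionGpd G F)) with hQ
  have hG0 : (Nat.card G : ℚ) ≠ 0 := by
    simp [Nat.card_eq_fintype_card, Fintype.card_ne_zero]
  have hsummand : ∀ c : Q, (1 : ℚ) / Nat.card (Quotient.out c ⟶ Quotient.out c)
      = (Nat.card (orbit G (Quotient.out c).pt) : ℚ) / Nat.card G := by
    intro c
    set x := (Quotient.out c).pt with hx
    have h1 : Nat.card (Quotient.out c ⟶ Quotient.out c) = Nat.card (stabilizer G x) :=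
      Nat.card_congr (Equiv.subtypeEquivRight fun g => (mem_stabilizer_iff).symm)
    have h2 : Nat.card (orbit G x) * Nat.card (stabilizer G x) = Nat.card G := by
      simpa [Nat.card_eq_fintype_card] using
        MulAction.card_orbit_mul_card_stabilizer_eq_card_group G x
    have hs0 : (Nat.card (stabilizer G x) : ℚ) ≠ 0 := by
      have : Nat.card (stabilizer G x) ≠ 0 := Nat.card_pos.ne'
      exact_mod_cast this
    rw [h1, div_eq_div_iff hs0 hG0, one_mul, ← h2]
    push_cast
    ring
  have hequiv : F ≃ Σ c : Q, (orbit G (Quotient.out c).pt) := by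
    refine (Equiv.sigmaFiberEquiv
      (Quotient.mk (isIsomorphicSetoid (ActionGpd G F)) : F → Q)).symm.trans
      (Equiv.sigmaCongrRight fun c => Equiv.subtypeEquivRight fun y => ?_)
    rw [Quotient.mk_eq_iff_out]
    exact actionGpd_rel_iff G F y (Quotient.out c).pt
  have hcardF : (Nat.card F : ℚ) = ∑ c : Q, (Nat.card (orbit G (Quotient.out c).pt) : ℚ) := by
    have := Nat.card_congr hequiv
    rw [this]
    rw [Nat.card_eq_fintype_card, Fintype.card_sigma]
    push_cast
    exact Finset.sum_congr rfl fun c _ => by rw [Nat.card_eq_fintype_card]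
  rw [gpdCard, finsum_eq_sum_of_fintype]
  calc ∑ c : Q, (1 : ℚ) / Nat.card (Quotient.out c ⟶ Quotient.out c)
      = ∑ c : Q, (Nat.card (orbit G (Quotient.out c).pt) : ℚ) / Nat.card G :=
        Finset.sum_congr rfl fun c _ => hsummand c
    _ = (∑ c : Q, (Nat.card (orbit G (Quotient.out c).pt) : ℚ)) / Nat.card G := by
        rw [Finset.sum_div]
    _ = (Nat.card F : ℚ) / Nat.card G := by rw [hcardF]
end

section
/- For a finite groupoid X, the groupoid cardinality of the 'free loop groupoid' ΛX (whose objects are pairs (x, γ) with x an object of X and γ ∈ Aut(x), and whose morphisms (x, γ) → (y, δ) are morphisms f : x → y with f ∘ γ = δ ∘ f) equals the number of isomorphism classes of objects of X: |ΛX| = |π₀X|. -/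
open CategoryTheory MulAction

/-! ### Auxiliary lemmas -/

section GroupAux

variable {G : Type*} [Group G] [Finite G]

lemma card_carrier_mul_card_commute (g : G) :
    Nat.card (ConjClasses.mk g).carrier * Nat.card {u : G // Commute u g} = Nat.card G := by
  classical
  cases nonempty_fintype G
  have e : {u : G // Commute u g} ≃ MulAction.stabilizer (ConjAct G) g :=
    { toFun := fun u => ⟨ConjAct.toConjAct u.1, by
        rw [MulAction.mem_stabilizer_iff, ConjAct.toConjAct_smul,
          mul_inv_eq_iff_eq_mul]
        exact u.2⟩
      invFun := fun h => ⟨ConjAct.ofConjAct h.1, by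
        have := h.2
        rw [MulAction.mem_stabilizer_iff, ConjAct.smul_def, mul_inv_eq_iff_eq_mul] at this
        exact this⟩
      left_inv := fun u => by simp
      right_inv := fun h => by simp }
  have horb : Nat.card (orbit (ConjAct G) g) * Nat.card (stabilizer (ConjAct G) g)
      = Nat.card G := by
    simp only [Nat.card_eq_fintype_card]
    rw [MulAction.card_orbit_mul_card_stabilizer_eq_card_group (ConjAct G) g]
    exact Fintype.card_congr ConjAct.ofConjAct.toEquiv
  rw [Nat.card_congr e, ← horb]
  congr 2
  rw [ConjAct.orbit_eq_carrier_conjClasses]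

lemma inv_card_commute_eq (g : G) :
    (1 : ℚ) / Nat.card {u : G // Commute u g}
      = ((ConjClasses.mk g).carrier.ncard : ℚ) / Nat.card G := by
  have h := card_carrier_mul_card_commute g
  have hZ : (Nat.card {u : G // Commute u g} : ℚ) ≠ 0 := by
    have : Nat.card {u : G // Commute u g} ≠ 0 :=
      Nat.card_ne_zero.mpr ⟨⟨⟨1, Commute.one_left _⟩⟩, inferInstance⟩
    exact_mod_cast this
  have hG : (Nat.card G : ℚ) ≠ 0 := by
    have : Nat.card G ≠ 0 := Nat.card_ne_zero.mpr ⟨⟨1⟩, inferInstance⟩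
    exact_mod_cast this
  rw [← Nat.card_coe_set_eq]
  field_simp
  exact_mod_cast (h.symm.trans (Nat.mul_comm _ _))

lemma sum_ncard_carrier_div_eq_one [Fintype (ConjClasses G)] :
    ∑ cc : ConjClasses G, ((cc.carrier.ncard : ℚ) / Nat.card G) = 1 := by
  classical
  have hG : (Nat.card G : ℚ) ≠ 0 := by
    have : Nat.card G ≠ 0 := Nat.card_ne_zero.mpr ⟨⟨1⟩, inferInstance⟩
    exact_mod_cast this
  rw [← Finset.sum_div, div_eq_one_iff_eq hG]
  have := Group.sum_card_conj_classes_eq_card G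
  rw [finsum_eq_sum_of_fintype] at this
  exact_mod_cast this

end GroupAux

section GpdAux

variable {Y : Type*} [Groupoid Y]

/-- Conjugation equivalence of endomorphism sets along a morphism in a groupoid. -/
def autEquivOfHom {a b : Y} (e : a ⟶ b) : (a ⟶ a) ≃ (b ⟶ b) where
  toFun g := Groupoid.inv e ≫ g ≫ e
  invFun g := e ≫ g ≫ Groupoid.inv e
  left_inv g := by simp
  right_inv g := by simp

lemma natCard_aut_eq_of_hom {a b : Y} (e : a ⟶ b) :
    Nat.card (a ⟶ a) = Nat.card (b ⟶ b) := Nat.card_congr (autEquivOfHom e)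

lemma quot_eq_iff_hom (a b : Y) :
    (⟦a⟧ : Quotient (isIsomorphicSetoid Y)) = ⟦b⟧ ↔ Nonempty (a ⟶ b) := by
  rw [Quotient.eq]
  exact (Groupoid.isoEquivHom a b).nonempty_congr

end GpdAux

section LoopAux

variable {X : Type*} [Groupoid X]

def LoopGpd.homMk {a b : LoopGpd X} (f : a.pt ⟶ b.pt) (h : a.loop ≫ f = f ≫ b.loop) :
    a ⟶ b := ⟨f, h⟩

def LoopGpd.homF {a b : LoopGpd X} (φ : a ⟶ b) :
    {f : a.pt ⟶ b.pt // a.loop ≫ f = f ≫ b.loop} := φ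

instance LoopGpd.homFinite [∀ x y : X, Finite (x ⟶ y)] (a b : LoopGpd X) :
    Finite (a ⟶ b) :=
  inferInstanceAs (Finite {f : a.pt ⟶ b.pt // a.loop ≫ f = f ≫ b.loop})

/-- Transporting a loop along an isomorphism gives an isomorphic object of the
loop groupoid. -/
def LoopGpd.conjHom (a : LoopGpd X) {x : X} (e : x ⟶ a.pt) :
    (⟨x, e ≫ a.loop ≫ Groupoid.inv e⟩ : LoopGpd X) ⟶ a :=
  ⟨e, by simp⟩

lemma LoopGpd.nonempty_hom_iff_isConj {x : X} (γ δ : x ⟶ x) :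
    Nonempty ((⟨x, γ⟩ : LoopGpd X) ⟶ ⟨x, δ⟩) ↔ IsConj γ δ := by
  constructor
  · rintro ⟨⟨f, hf⟩⟩
    rw [isConj_iff]
    refine ⟨Groupoid.inv f, ?_⟩
    have hff : Groupoid.inv (Groupoid.inv f) = f := by
      simp [Groupoid.inv_eq_inv]
    simp only [Groupoid.vertexGroup_mul, Groupoid.vertexGroup_inv, hff, Category.assoc]
    rw [hf]; simp
  · intro h
    obtain ⟨c, hc⟩ := isConj_iff.mp h
    simp only [Groupoid.vertexGroup_mul, Groupoid.vertexGroup_inv, Category.assoc] at hc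
    refine ⟨⟨Groupoid.inv c, ?_⟩⟩
    simp only [← hc]
    simp

/-- The map on isomorphism classes induced by the base-point projection. -/
def LoopGpd.toBase (X : Type*) [Groupoid X] :
    Quotient (isIsomorphicSetoid (LoopGpd X)) → Quotient (isIsomorphicSetoid X) :=
  Quotient.lift (fun a => ⟦a.pt⟧)
    (fun a b h => by
      obtain ⟨φ⟩ := h
      exact (quot_eq_iff_hom _ _).mpr ⟨(LoopGpd.homF φ.hom).1⟩)

@[simp] lemma LoopGpd.toBase_mk (a : LoopGpd X) :
    LoopGpd.toBase X ⟦a⟧ = ⟦a.pt⟧ := rfl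

/-- The map sending a conjugacy class in `Aut x` to the isomorphism class of the
corresponding loop. -/
def LoopGpd.psi (x : X) :
    ConjClasses (x ⟶ x) → Quotient (isIsomorphicSetoid (LoopGpd X)) :=
  Quotient.lift
    (fun γ : x ⟶ x => (⟦(⟨x, γ⟩ : LoopGpd X)⟧ : Quotient (isIsomorphicSetoid (LoopGpd X))))
    (fun γ δ h => (quot_eq_iff_hom _ _).mpr ((LoopGpd.nonempty_hom_iff_isConj γ δ).mpr h))

@[simp] lemma LoopGpd.psi_mk (x : X) (γ : x ⟶ x) :
    LoopGpd.psi x (ConjClasses.mk γ) = ⟦(⟨x, γ⟩ : LoopGpd X)⟧ := rfl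

lemma LoopGpd.finiteQuot [Finite (Quotient (isIsomorphicSetoid X))]
    [∀ x y : X, Finite (x ⟶ y)] :
    Finite (Quotient (isIsomorphicSetoid (LoopGpd X))) := by
  apply Finite.of_surjective
    (fun p : Σ d : Quotient (isIsomorphicSetoid X), ((Quotient.out d : X) ⟶ Quotient.out d) =>
      (⟦(⟨(Quotient.out p.1 : X), p.2⟩ : LoopGpd X)⟧ : Quotient (isIsomorphicSetoid (LoopGpd X))))
  intro c
  obtain ⟨a, rfl⟩ := Quotient.exists_rep c
  obtain ⟨e⟩ : Nonempty ((Quotient.out (⟦a.pt⟧ : Quotient (isIsomorphicSetoid X)) : X) ⟶ a.pt) :=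
    (quot_eq_iff_hom _ _).mp (Quotient.out_eq _)
  refine ⟨⟨⟦a.pt⟧, e ≫ a.loop ≫ Groupoid.inv e⟩, ?_⟩
  exact (quot_eq_iff_hom _ _).mpr ⟨LoopGpd.conjHom a e⟩

end LoopAux

/-- For a finite groupoid `X` (finitely many isomorphism classes, finite
automorphism groups), the groupoid cardinality of the free loop groupoid `ΛX`
equals the number of isomorphism classes of `X`: `|ΛX| = |π₀X|`. -/
theorem gpdCard_loopGpd (X : Type*) [Groupoid X]
    [Finite (Quotient (isIsomorphicSetoid X))] [∀ x y : X, Finite (x ⟶ y)] :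
    gpdCard (LoopGpd X) = (Nat.card (Quotient (isIsomorphicSetoid X)) : ℚ) := by
  classical
  haveI : Finite (Quotient (isIsomorphicSetoid (LoopGpd X))) := LoopGpd.finiteQuot
  letI : Fintype (Quotient (isIsomorphicSetoid (LoopGpd X))) := Fintype.ofFinite _
  letI : Fintype (Quotient (isIsomorphicSetoid X)) := Fintype.ofFinite _
  unfold gpdCard
  rw [finsum_eq_sum_of_fintype,
    ← Finset.sum_fiberwise Finset.univ (LoopGpd.toBase X)
      (fun c => (1 : ℚ) / Nat.card (Quotient.out c ⟶ Quotient.out c))]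
  have inner : ∀ d : Quotient (isIsomorphicSetoid X),
      (∑ c ∈ Finset.univ.filter (fun c => LoopGpd.toBase X c = d),
        (1 : ℚ) / Nat.card (Quotient.out c ⟶ Quotient.out c)) = 1 := by
    intro d
    set x : X := Quotient.out d with hx
    letI : Fintype (ConjClasses (x ⟶ x)) := Fintype.ofFinite _
    refine Eq.trans ?_ (sum_ncard_carrier_div_eq_one (G := (x ⟶ x)))
    refine (Finset.sum_bij (fun cc _ => LoopGpd.psi x cc) ?_ ?_ ?_ ?_).symm
    · -- membership
      intro cc _
      obtain ⟨γ, rfl⟩ := ConjClasses.mk_surjective cc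
      simp only [LoopGpd.psi_mk, Finset.mem_filter, Finset.mem_univ, true_and,
        LoopGpd.toBase_mk]
      exact Quotient.out_eq d
    · -- injectivity
      intro cc1 _ cc2 _ h
      obtain ⟨γ, rfl⟩ := ConjClasses.mk_surjective cc1
      obtain ⟨δ, rfl⟩ := ConjClasses.mk_surjective cc2
      simp only [LoopGpd.psi_mk] at h
      rw [ConjClasses.mk_eq_mk_iff_isConj]
      exact (LoopGpd.nonempty_hom_iff_isConj γ δ).mp ((quot_eq_iff_hom _ _).mp h)
    · -- surjectivity
      intro c hc
      simp only [Finset.mem_filter, Finset.mem_univ, true_and] at hc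
      obtain ⟨a, rfl⟩ := Quotient.exists_rep c
      rw [LoopGpd.toBase_mk] at hc
      have : (⟦a.pt⟧ : Quotient (isIsomorphicSetoid X)).out = x := by rw [hc]
      obtain ⟨e⟩ : Nonempty (x ⟶ a.pt) := by
        rw [← this]
        exact (quot_eq_iff_hom _ _).mp (Quotient.out_eq _)
      exact ⟨ConjClasses.mk (e ≫ a.loop ≫ Groupoid.inv e), Finset.mem_univ _,
        (quot_eq_iff_hom _ _).mpr ⟨LoopGpd.conjHom a e⟩⟩
    · -- values
      intro cc _
      obtain ⟨γ, rfl⟩ := ConjClasses.mk_surjective cc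
      obtain ⟨ε⟩ : Nonempty ((⟦(⟨x, γ⟩ : LoopGpd X)⟧ :
          Quotient (isIsomorphicSetoid (LoopGpd X))).out ⟶ (⟨x, γ⟩ : LoopGpd X)) :=
        (quot_eq_iff_hom _ _).mp (Quotient.out_eq _)
      have e2 : ((⟨x, γ⟩ : LoopGpd X) ⟶ (⟨x, γ⟩ : LoopGpd X)) ≃ {u : x ⟶ x // Commute u γ} :=
        { toFun := fun φ => ⟨(LoopGpd.homF φ).1, ((LoopGpd.homF φ).2).symm⟩
          invFun := fun u => LoopGpd.homMk u.1 u.2.symm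
          left_inv := fun φ => rfl
          right_inv := fun u => rfl }
      have h1 : Nat.card ((LoopGpd.psi x (ConjClasses.mk γ)).out ⟶
          (LoopGpd.psi x (ConjClasses.mk γ)).out) = Nat.card {u : x ⟶ x // Commute u γ} := by
        rw [LoopGpd.psi_mk]
        rw [natCard_aut_eq_of_hom ε]
        exact Nat.card_congr e2
      show ((ConjClasses.mk γ).carrier.ncard : ℚ) / Nat.card (x ⟶ x)
          = (1 : ℚ) / Nat.card ((LoopGpd.psi x (ConjClasses.mk γ)).out ⟶
              (LoopGpd.psi x (ConjClasses.mk γ)).out)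
      rw [h1, inv_card_commute_eq γ]
  rw [Finset.sum_congr rfl (fun d _ => inner d)]
  simp [Finset.card_univ, Nat.card_eq_fintype_card]
end

section
/- For finite groupoids (groupoids with finitely many objects and finite hom-sets) X, the groupoid cardinality satisfies: for any functor p : Y → X between finite groupoids that is a fibration with fiber Y_x over (an object representing) each isomorphism class x, |Y| = ∑_{[x] ∈ π₀X} |Y_x| / |Aut(x)|. -/
open CategoryTheory MulAction

/-- A functor of groupoids is an isofibration if every isomorphism
`p.obj y ≅ x` lifts to an isomorphism out of `y`. -/
def IsIsofibration {Y X : Type*} [Groupoid Y] [Groupoid X] (p : Y ⥤ X) : Prop :=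
  ∀ (y : Y) (x : X) (e : p.obj y ≅ x), ∃ (y' : Y) (h : p.obj y' = x)
    (e' : y ≅ y'), p.map e'.hom ≫ eqToHom h = e.hom

/-- The (strict) fiber groupoid of `p : Y ⥤ X` over `x`: objects `y` with
`p.obj y = x`, morphisms those mapping to the identity of `x`. -/
def Fiber {Y X : Type*} [Groupoid Y] [Groupoid X] (p : Y ⥤ X) (x : X) :=
  {y : Y // p.obj y = x}

instance {Y X : Type*} [Groupoid Y] [Groupoid X] (p : Y ⥤ X) (x : X) :
    Groupoid (Fiber p x) where
  Hom a b := {f : a.1 ⟶ b.1 // p.map f = eqToHom (a.2.trans b.2.symm)}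
  id a := ⟨𝟙 _, by simp⟩
  comp {a b c} f g := ⟨f.1 ≫ g.1, by
    rw [Functor.map_comp, f.2, g.2, eqToHom_trans]⟩
  id_comp := by intros; apply Subtype.ext; simp
  comp_id := by intros; apply Subtype.ext; simp
  assoc := by intros; apply Subtype.ext; simp
  inv {a b} f := ⟨Groupoid.inv f.1, by
    have h : p.map f.1 ≫ p.map (Groupoid.inv f.1) = 𝟙 _ := by
      rw [← Functor.map_comp, Groupoid.comp_inv, CategoryTheory.Functor.map_id]
    rw [f.2] at h
    calc p.map (Groupoid.inv f.1)
        = eqToHom (b.2.trans a.2.symm) ≫ eqToHom (a.2.trans b.2.symm) ≫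
            p.map (Groupoid.inv f.1) := by simp
      _ = eqToHom (b.2.trans a.2.symm) := by rw [h, Category.comp_id]⟩
  inv_comp := by intros; apply Subtype.ext; simp
  comp_inv := by intros; apply Subtype.ext; simp

section GpdCardAux

variable {Z : Type*} [Groupoid Z]

/-- The cardinality of the "star" of an object: all morphisms out of it. -/
noncomputable def starCard (z : Z) : ℕ := Nat.card (Σ z' : Z, z ⟶ z')

/-- Transport of stars along a morphism. -/
def starEquivOfHom {v z : Z} (f : v ⟶ z) :
    (Σ z' : Z, z ⟶ z') ≃ (Σ z' : Z, v ⟶ z') where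
  toFun u := ⟨u.1, f ≫ u.2⟩
  invFun u := ⟨u.1, Groupoid.inv f ≫ u.2⟩
  left_inv u := by cases u; simp [Groupoid.inv_eq_inv]
  right_inv u := by cases u; simp [Groupoid.inv_eq_inv]

lemma starCard_eq_of_hom {v z : Z} (f : v ⟶ z) : starCard z = starCard v :=
  Nat.card_congr (starEquivOfHom f)

lemma mk_eq_mk_of_iso {a b : Z} (e : a ≅ b) :
    Quotient.mk (isIsomorphicSetoid Z) a = Quotient.mk (isIsomorphicSetoid Z) b :=
  Quot.sound ⟨e⟩

lemma iso_of_mk_eq_mk {a b : Z} (h : Quotient.mk (isIsomorphicSetoid Z) a =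
    Quotient.mk (isIsomorphicSetoid Z) b) : Nonempty (a ≅ b) :=
  Quotient.exact h

variable [Finite Z] [∀ a b : Z, Finite (a ⟶ b)]

lemma starCard_pos (z : Z) : 0 < starCard z := by
  haveI : Nonempty (Σ z' : Z, z ⟶ z') := ⟨⟨z, 𝟙 z⟩⟩
  exact Nat.card_pos

lemma starSum (v : Z) :
    ∑ᶠ u : (Σ z' : Z, v ⟶ z'), (1 : ℚ) / starCard u.1 = 1 := by
  cases nonempty_fintype Z
  haveI : ∀ a b : Z, Fintype (a ⟶ b) := fun a b => Fintype.ofFinite _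
  rw [finsum_eq_sum_of_fintype]
  have h : ∀ u : (Σ z' : Z, v ⟶ z'), starCard u.1 = starCard v :=
    fun u => starCard_eq_of_hom u.2
  rw [Finset.sum_congr rfl fun u _ => by rw [h u]]
  rw [Finset.sum_const, Finset.card_univ, nsmul_eq_mul, ← Nat.card_eq_fintype_card]
  have h0 : (starCard v : ℚ) ≠ 0 := Nat.cast_ne_zero.mpr (starCard_pos v).ne'
  show (starCard v : ℚ) * (1 / starCard v) = 1
  field_simp

lemma costarSum (v : Z) :
    ∑ᶠ u : (Σ z' : Z, z' ⟶ v), (1 : ℚ) / starCard u.1 = 1 := by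
  cases nonempty_fintype Z
  haveI : ∀ a b : Z, Fintype (a ⟶ b) := fun a b => Fintype.ofFinite _
  have := starSum v
  rw [finsum_eq_sum_of_fintype] at this ⊢
  rw [← Fintype.sum_equiv
    (Equiv.sigmaCongrRight fun z' => (Groupoid.invEquiv (X := v) (Y := z')))
    (fun u : (Σ z' : Z, v ⟶ z') => (1 : ℚ) / starCard u.1)
    (fun u : (Σ z' : Z, z' ⟶ v) => (1 : ℚ) / starCard u.1)
    (fun u => rfl)]
  exact this

end GpdCardAux

lemma gpdCard_eq_starSum (Z : Type*) [Groupoid Z] [Finite Z]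
    [∀ a b : Z, Finite (a ⟶ b)] :
    gpdCard Z = ∑ᶠ z : Z, (1 : ℚ) / starCard z := by
  classical
  cases nonempty_fintype Z
  haveI : ∀ a b : Z, Fintype (a ⟶ b) := fun a b => Fintype.ofFinite _
  haveI := Fintype.ofFinite (Quotient (isIsomorphicSetoid Z))
  rw [gpdCard, finsum_eq_sum_of_fintype, finsum_eq_sum_of_fintype]
  rw [← Fintype.sum_fiberwise (fun z : Z => Quotient.mk (isIsomorphicSetoid Z) z)
      (fun z : Z => (1 : ℚ) / starCard z)]
  apply Finset.sum_congr rfl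
  intro c _
  set r := Quotient.out c with hr
  have hrc : Quotient.mk (isIsomorphicSetoid Z) r = c := Quotient.out_eq c
  set a := Nat.card (r ⟶ r) with hadef
  have ha : 0 < a := by
    haveI : Nonempty (r ⟶ r) := ⟨𝟙 r⟩
    exact Nat.card_pos
  set k := Fintype.card {z : Z // Quotient.mk (isIsomorphicSetoid Z) z = c} with hkdef
  have hk : 0 < k := Fintype.card_pos_iff.mpr ⟨⟨r, hrc⟩⟩
  have hsr : starCard r = k * a := by
    have h1 : starCard r = Fintype.card (Σ z' : Z, r ⟶ z') := Nat.card_eq_fintype_card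
    rw [h1, Fintype.card_sigma]
    have hcard : ∀ z' : Z, Fintype.card (r ⟶ z') =
        if Quotient.mk (isIsomorphicSetoid Z) z' = c then a else 0 := by
      intro z'
      split_ifs with h
      · obtain ⟨e⟩ : Nonempty (z' ≅ r) := iso_of_mk_eq_mk (h.trans hrc.symm)
        rw [← Nat.card_eq_fintype_card, hadef]
        exact Nat.card_congr ⟨fun f => f ≫ e.hom, fun f => f ≫ e.inv,
          fun f => by simp, fun f => by simp⟩
      · rw [Fintype.card_eq_zero_iff]
        exact ⟨fun f => h ((mk_eq_mk_of_iso (asIso f).symm).trans hrc)⟩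
    rw [Finset.sum_congr rfl fun z' _ => hcard z']
    rw [← Finset.sum_filter, Finset.sum_const, hkdef, Fintype.card_subtype, smul_eq_mul]
  have hstar : ∀ z : {z : Z // Quotient.mk (isIsomorphicSetoid Z) z = c},
      starCard z.1 = starCard r := by
    intro z
    obtain ⟨e⟩ : Nonempty (z.1 ≅ r) := iso_of_mk_eq_mk (z.2.trans hrc.symm)
    exact (starCard_eq_of_hom e.hom).symm
  rw [Finset.sum_congr rfl fun z _ => by rw [hstar z]]
  rw [Finset.sum_const, Finset.card_univ, nsmul_eq_mul, hsr]
  have hka : ((k : ℚ) * a) ≠ 0 := by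
    have : (k : ℚ) ≠ 0 := Nat.cast_ne_zero.mpr hk.ne'
    have : (a : ℚ) ≠ 0 := Nat.cast_ne_zero.mpr ha.ne'
    positivity
  rw [Nat.cast_mul]
  field_simp
  exact congrArg _ (Fintype.card_congr (Equiv.refl _))

instance fiberFinite {Y X : Type*} [Groupoid Y] [Groupoid X] [Finite Y]
    (p : Y ⥤ X) (x : X) : Finite (Fiber p x) :=
  inferInstanceAs (Finite {y : Y // p.obj y = x})

instance fiberHomFinite {Y X : Type*} [Groupoid Y] [Groupoid X]
    [∀ a b : Y, Finite (a ⟶ b)] (p : Y ⥤ X) (x : X) (a b : Fiber p x) :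
    Finite (a ⟶ b) :=
  inferInstanceAs (Finite {f : a.1 ⟶ b.1 // p.map f = eqToHom (a.2.trans b.2.symm)})

/-- The crux: for an isofibration, the weighted count of morphisms from `y'`
into the fiber over `x` equals `|Aut x|`, provided `p.obj y' ≅ x`. -/
lemma fiber_sum_eq {Y X : Type*} [Groupoid Y] [Groupoid X]
    [Finite X] [Finite Y] [∀ x y : X, Finite (x ⟶ y)] [∀ x y : Y, Finite (x ⟶ y)]
    (p : Y ⥤ X) (hp : IsIsofibration p) (x : X) (y' : Y)
    (hc : Nonempty (p.obj y' ≅ x)) :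
    ∑ᶠ u : (Σ y : Fiber p x, (y' ⟶ y.1)), (1 : ℚ) / starCard u.1 =
      Nat.card (x ⟶ x) := by
  classical
  haveI : Fintype (Fiber p x) := Fintype.ofFinite _
  haveI : ∀ a b : Y, Fintype (a ⟶ b) := fun a b => Fintype.ofFinite _
  haveI : ∀ a b : Fiber p x, Fintype (a ⟶ b) := fun a b => Fintype.ofFinite _
  haveI : Fintype (Σ y : Fiber p x, (y' ⟶ y.1)) := Fintype.ofFinite _
  haveI : Fintype (p.obj y' ⟶ x) := Fintype.ofFinite _
  rw [finsum_eq_sum_of_fintype]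
  set π : (Σ y : Fiber p x, (y' ⟶ y.1)) → (p.obj y' ⟶ x) :=
    fun u => p.map u.2 ≫ eqToHom u.1.2 with hπ
  rw [← Fintype.sum_fiberwise π
    (fun u : (Σ y : Fiber p x, (y' ⟶ y.1)) => (1 : ℚ) / starCard u.1)]
  have key : ∀ g : p.obj y' ⟶ x,
      ∑ u : {u : (Σ y : Fiber p x, (y' ⟶ y.1)) // π u = g},
        (1 : ℚ) / starCard u.1.1 = 1 := by
    intro g
    obtain ⟨y₀', h₀, e', he⟩ := hp y' x (asIso g)
    rw [asIso_hom] at he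
    set y₀ : Fiber p x := ⟨y₀', h₀⟩ with hy₀
    set f₀ : y' ⟶ y₀.1 := e'.hom with hf₀def
    have hf₀ : p.map f₀ = g ≫ eqToHom h₀.symm := by
      rw [← he]; simp
    have hresol : ∀ (u : Σ y : Fiber p x, (y' ⟶ y.1)), π u = g →
        p.map u.2 = g ≫ eqToHom u.1.2.symm := by
      intro u hu
      rw [← hu, hπ]; simp
    let E : {u : (Σ y : Fiber p x, (y' ⟶ y.1)) // π u = g} ≃
        (Σ z : Fiber p x, (y₀ ⟶ z)) :=
      { toFun := fun w => ⟨w.1.1, ⟨Groupoid.inv f₀ ≫ w.1.2, by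
          have h1 := hresol w.1 w.2
          simp only [Groupoid.inv_eq_inv, Functor.map_comp, Functor.map_inv, h1, hf₀]
          simp [eqToHom_trans]⟩⟩
        invFun := fun s => ⟨⟨s.1, f₀ ≫ s.2.1⟩, by
          have h2 := s.2.2
          rw [hπ]
          simp only [Functor.map_comp, h2]
          rw [Category.assoc, eqToHom_trans, hf₀, Category.assoc, eqToHom_trans,
            eqToHom_refl, Category.comp_id]⟩
        left_inv := fun w => by
          apply Subtype.ext
          obtain ⟨⟨y, f⟩, hw⟩ := w
          dsimp
          congr 1
          simp [Groupoid.inv_eq_inv]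
        right_inv := fun s => by
          obtain ⟨z, φ⟩ := s
          dsimp
          congr 1
          apply Subtype.ext
          simp [Groupoid.inv_eq_inv] }
    rw [Fintype.sum_equiv E
      (fun w : {u : (Σ y : Fiber p x, (y' ⟶ y.1)) // π u = g} =>
        (1 : ℚ) / starCard w.1.1)
      (fun s : (Σ z : Fiber p x, (y₀ ⟶ z)) => (1 : ℚ) / starCard s.1)
      (fun w => rfl)]
    have := starSum y₀
    rw [finsum_eq_sum_of_fintype] at this
    exact this
  rw [Finset.sum_congr rfl fun g _ => key g]
  rw [Finset.sum_const, Finset.card_univ, nsmul_eq_mul, mul_one,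
    ← Nat.card_eq_fintype_card]
  congr 1
  obtain ⟨e⟩ := hc
  refine Nat.card_congr ⟨fun f => e.inv ≫ f, fun f => e.hom ≫ f, fun f => ?_, fun f => ?_⟩ <;> simp

/-- Groupoid cardinality along an isofibration of finite groupoids:
`|Y| = ∑_{[x] ∈ π₀X} |Y_x| / |Aut(x)|`. -/
theorem gpdCard_isofibration {Y X : Type*} [Groupoid Y] [Groupoid X]
    [Finite X] [Finite Y] [∀ x y : X, Finite (x ⟶ y)]
    [∀ x y : Y, Finite (x ⟶ y)] (p : Y ⥤ X) (hp : IsIsofibration p) :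
    gpdCard Y = ∑ᶠ c : Quotient (isIsomorphicSetoid X),
      gpdCard (Fiber p (Quotient.out c)) /
        (Nat.card (Quotient.out c ⟶ Quotient.out c) : ℚ) := by
  classical
  cases nonempty_fintype X
  cases nonempty_fintype Y
  haveI : ∀ a b : Y, Fintype (a ⟶ b) := fun a b => Fintype.ofFinite _
  haveI : ∀ a b : X, Fintype (a ⟶ b) := fun a b => Fintype.ofFinite _
  haveI := Fintype.ofFinite (Quotient (isIsomorphicSetoid X))
  rw [gpdCard_eq_starSum Y, finsum_eq_sum_of_fintype, finsum_eq_sum_of_fintype]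
  rw [← Fintype.sum_fiberwise
      (fun y : Y => Quotient.mk (isIsomorphicSetoid X) (p.obj y))
      (fun y : Y => (1 : ℚ) / starCard y)]
  apply Finset.sum_congr rfl
  intro c _
  set x := Quotient.out c with hx
  haveI : Fintype (Fiber p x) := Fintype.ofFinite _
  haveI : ∀ a b : Fiber p x, Fintype (a ⟶ b) := fun a b => Fintype.ofFinite _
  set a := Nat.card (x ⟶ x) with hadef
  have ha : (a : ℚ) ≠ 0 := by
    haveI : Nonempty (x ⟶ x) := ⟨𝟙 x⟩
    exact Nat.cast_ne_zero.mpr Nat.card_pos.ne'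
  have hN : ∀ y' : Y, Quotient.mk (isIsomorphicSetoid X) (p.obj y') = c →
      ∑ u : (Σ y : Fiber p x, (y' ⟶ y.1)), (1 : ℚ) / starCard u.1 = a := by
    intro y' h
    have hc : Nonempty (p.obj y' ≅ x) :=
      iso_of_mk_eq_mk (h.trans (Quotient.out_eq c).symm)
    have := fiber_sum_eq p hp x y' hc
    rw [finsum_eq_sum_of_fintype] at this
    exact this
  have hN0 : ∀ y' : Y, Quotient.mk (isIsomorphicSetoid X) (p.obj y') ≠ c →
      ∑ u : (Σ y : Fiber p x, (y' ⟶ y.1)), (1 : ℚ) / starCard u.1 = 0 := by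
    intro y' h
    haveI : IsEmpty (Σ y : Fiber p x, (y' ⟶ y.1)) := by
      constructor
      intro u
      exact h ((mk_eq_mk_of_iso (asIso (p.map u.2 ≫ eqToHom u.1.2))).trans
        (Quotient.out_eq c))
    exact Fintype.sum_empty _
  have hdouble :
      ∑ t : (Σ y' : Y, Σ y : Fiber p x, (y' ⟶ y.1)),
        ((1 : ℚ) / starCard t.1) * ((1 : ℚ) / starCard t.2.1) =
      (∑ y' : {y' : Y // Quotient.mk (isIsomorphicSetoid X) (p.obj y') = c},
        (1 : ℚ) / starCard y'.1) * a := by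
    rw [← Finset.univ_sigma_univ, Finset.sum_sigma]
    have step : ∀ y' : Y, (∑ u : (Σ y : Fiber p x, (y' ⟶ y.1)),
        ((1 : ℚ) / starCard y') * ((1 : ℚ) / starCard u.1)) =
        if Quotient.mk (isIsomorphicSetoid X) (p.obj y') = c
          then ((1 : ℚ) / starCard y') * a else 0 := by
      intro y'
      rw [← Finset.mul_sum]
      split_ifs with h
      · rw [hN y' h]
      · rw [hN0 y' h, mul_zero]
    rw [Finset.sum_congr rfl fun y' _ => step y']
    rw [← Finset.sum_filter, Finset.sum_subtype
        (p := fun y' : Y => Quotient.mk (isIsomorphicSetoid X) (p.obj y') = c)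
        (Finset.univ.filter fun y' : Y =>
          Quotient.mk (isIsomorphicSetoid X) (p.obj y') = c)
        (fun y' => by simp)
        (fun y' : Y => ((1 : ℚ) / starCard y') * (a : ℚ)), ← Finset.sum_mul]
  have hswap :
      ∑ t : (Σ y' : Y, Σ y : Fiber p x, (y' ⟶ y.1)),
        ((1 : ℚ) / starCard t.1) * ((1 : ℚ) / starCard t.2.1) =
      gpdCard (Fiber p x) := by
    let e : (Σ y' : Y, Σ y : Fiber p x, (y' ⟶ y.1)) ≃
        (Σ y : Fiber p x, Σ y' : Y, (y' ⟶ y.1)) :=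
      { toFun := fun t => ⟨t.2.1, t.1, t.2.2⟩
        invFun := fun t => ⟨t.2.1, t.1, t.2.2⟩
        left_inv := fun ⟨y', y, f⟩ => rfl
        right_inv := fun ⟨y, y', f⟩ => rfl }
    rw [Fintype.sum_equiv e
      (fun t : (Σ y' : Y, Σ y : Fiber p x, (y' ⟶ y.1)) =>
        ((1 : ℚ) / starCard t.1) * ((1 : ℚ) / starCard t.2.1))
      (fun t : (Σ y : Fiber p x, Σ y' : Y, (y' ⟶ y.1)) =>
        ((1 : ℚ) / starCard t.2.1) * ((1 : ℚ) / starCard t.1))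
      (fun t => rfl)]
    rw [← Finset.univ_sigma_univ, Finset.sum_sigma]
    have inner : ∀ y : Fiber p x, ∑ u : (Σ y' : Y, (y' ⟶ y.1)),
        ((1 : ℚ) / starCard u.1) * ((1 : ℚ) / starCard y) =
        (1 : ℚ) / starCard y := by
      intro y
      rw [← Finset.sum_mul]
      have := costarSum (y.1)
      rw [finsum_eq_sum_of_fintype] at this
      rw [this, one_mul]
    rw [Finset.sum_congr rfl fun y _ => inner y]
    rw [gpdCard_eq_starSum (Fiber p x), finsum_eq_sum_of_fintype]
  rw [eq_div_iff ha, ← hdouble, hswap]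
end
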